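/- Let $B_{(T_k)}$ be a bounded shift operator on $\ell^p((X_k)_k,\mathbb{Z})$ (or $c_0((X_k)_k,\mathbb{Z})$) with $T_k\in L(X_k,X_{k-1})$. Then $B_{(T_k)}$ is mixing if and only if for every $j\in\mathbb{Z}$ and all non-empty open subsets $U_j, V_j$ of $X_j$, there exists $n_0$ such that for all $n\ge n_0$: $T_{j-n,j}U_j \cap B_{j-n}(0,1) \ne \emptyset$ and $T_{j,j+n}B_{j+n}(0,1)\cap V_j \ne \emptyset$, where $T_{k,n} = T_{k+1}\circ\cdots\circ T_n$ for $k<n$ and $T_{n,n}=I$. -/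

import Mathlib

open Filter Topology ENNReal

section Defs
variable {Y : Type*} [TopologicalSpace Y]

/-- A map is hypercyclic if some point has dense orbit. -/
def Hypercyclic (f : Y → Y) : Prop := ∃ y : Y, Dense (Set.range fun n : ℕ => f^[n] y)

/-- Topological transitivity. -/
def TopologicallyTransitive (f : Y → Y) : Prop :=
  ∀ U V : Set Y, IsOpen U → IsOpen V → U.Nonempty → V.Nonempty →
    ∃ n : ℕ, (f^[n] '' U ∩ V).Nonempty

/-- Topological mixing: return sets of pairs of non-empty open sets are cofinite. -/
def TopologicallyMixing (f : Y → Y) : Prop :=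
  ∀ U V : Set Y, IsOpen U → IsOpen V → U.Nonempty → V.Nonempty →
    ∃ N : ℕ, ∀ n ≥ N, (f^[n] '' U ∩ V).Nonempty

/-- Weak mixing: `f ⊕ f` is hypercyclic. -/
def WeaklyMixing (f : Y → Y) : Prop := Hypercyclic (fun q : Y × Y => (f q.1, f q.2))

/-- Chaos in the sense of Devaney: hypercyclic with a dense set of periodic points. -/
def Chaotic (f : Y → Y) : Prop :=
  Hypercyclic f ∧ Dense {y : Y | ∃ d : ℕ, 1 ≤ d ∧ f^[d] y = y}

/-- Lower density of a set of natural numbers. -/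
noncomputable def lowerDensity (A : Set ℕ) : ℝ :=
  Filter.liminf
    (fun N : ℕ => (∑ n ∈ Finset.range N, Set.indicator A (fun _ => (1 : ℝ)) n) / N)
    Filter.atTop

/-- Frequent hypercyclicity: some orbit visits every non-empty open set along a set of
positive lower density. -/
def FrequentlyHypercyclic (f : Y → Y) : Prop :=
  ∃ y : Y, ∀ U : Set Y, IsOpen U → U.Nonempty → 0 < lowerDensity {n : ℕ | f^[n] y ∈ U}

end Defs

/-- The `c₀`-sum of a family of normed spaces, realised as a submodule of `lp E ∞`:
those bounded families whose norms tend to `0` along the cofinite filter. -/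
noncomputable def c0Sum {ι : Type*} (E : ι → Type*) [∀ i, NormedAddCommGroup (E i)]
    [∀ i, NormedSpace ℝ (E i)] : Submodule ℝ (lp E ∞) where
  carrier := {x | Tendsto (fun i => ‖(x : ∀ i, E i) i‖) cofinite (nhds 0)}
  add_mem' := by
    intro a b ha hb
    refine squeeze_zero (fun i => norm_nonneg _) (fun i => ?_) (by simpa using ha.add hb)
    simp only [lp.coeFn_add, Pi.add_apply]
    exact norm_add_le _ _
  zero_mem' := by
    simp only [Set.mem_setOf_eq, lp.coeFn_zero, Pi.zero_apply, norm_zero]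
    exact tendsto_const_nhds
  smul_mem' := by
    intro c a ha
    have h : Tendsto (fun i => ‖c‖ * ‖(a : ∀ i, E i) i‖) cofinite (nhds 0) := by
      simpa using ha.const_mul ‖c‖
    refine squeeze_zero (fun i => norm_nonneg _) (fun i => ?_) h
    simp only [lp.coeFn_smul, Pi.smul_apply]
    exact (norm_smul c _).le

/-- The identity, as a continuous linear map between equal members of a family of spaces. -/
def castL (E : ℤ → Type*) [∀ k, NormedAddCommGroup (E k)] [∀ k, NormedSpace ℝ (E k)]
    {j k : ℤ} (h : j = k) : E j →L[ℝ] E k := by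
  subst h; exact ContinuousLinearMap.id ℝ (E j)

/-- The composite `T_{j,j+n} = T_{j+1} ∘ ⋯ ∘ T_{j+n} : E (j+n) → E j` (here `T k` denotes
the operator `E (k+1) → E k`). -/
noncomputable def iterComp {E : ℤ → Type*} [∀ k, NormedAddCommGroup (E k)]
    [∀ k, NormedSpace ℝ (E k)] (T : ∀ k : ℤ, E (k + 1) →L[ℝ] E k) :
    ∀ (j : ℤ) (n : ℕ), E (j + n) →L[ℝ] E j
  | j, 0 => castL E (by simp)
  | j, (n + 1) => (iterComp T j n).comp ((T (j + n)).comp (castL E (by push_cast; ring)))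

section Abstract
open Pointwise

variable {E : ℤ → Type*} [∀ k, NormedAddCommGroup (E k)] [∀ k, NormedSpace ℝ (E k)]

theorem castL_cast {j k : ℤ} (h : j = k) (x : E j) :
    castL E h x = _root_.cast (congrArg E h) x := by subst h; rfl

theorem castL_self {j : ℤ} (h : j = j) (x : E j) : castL E h x = x := by rfl

/-- Abstract data realising `Y` as a "sequence space" over the family `E`. -/
structure ShiftData (E : ℤ → Type*) [∀ k, NormedAddCommGroup (E k)]
    [∀ k, NormedSpace ℝ (E k)] (Y : Type*) [NormedAddCommGroup Y]
    [NormedSpace ℝ Y] where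
  coord : ∀ k : ℤ, Y →ₗ[ℝ] E k
  single : ∀ k : ℤ, E k →ₗ[ℝ] Y
  norm_coord : ∀ (k : ℤ) (y : Y), ‖coord k y‖ ≤ ‖y‖
  coord_single_self : ∀ (k : ℤ) (a : E k), coord k (single k a) = a
  coord_single_ne : ∀ (k m : ℤ) (a : E m), k ≠ m → coord k (single m a) = 0
  norm_single : ∀ (k : ℤ) (a : E k), ‖single k a‖ ≤ ‖a‖
  ext' : ∀ y : Y, (∀ k : ℤ, coord k y = 0) → y = 0
  dense' : ∀ (y : Y) (ε : ℝ), 0 < ε → ∃ (s : Finset ℤ) (a : ∀ k : ℤ, E k),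
      ‖y - ∑ k ∈ s, single k (a k)‖ < ε

namespace ShiftData

variable {Y : Type*} [NormedAddCommGroup Y] [NormedSpace ℝ Y]
variable (D : ShiftData E Y) (T : ∀ k : ℤ, E (k + 1) →L[ℝ] E k)

theorem coord_cast {a b : ℤ} (h : a = b) (y : Y) :
    castL E h (D.coord a y) = D.coord b y := by subst h; rfl

theorem single_cast {a b : ℤ} (h : a = b) (c : E a) :
    D.single b (castL E h c) = D.single a c := by subst h; rfl

theorem eq_of_coord {y z : Y} (h : ∀ k : ℤ, D.coord k y = D.coord k z) : y = z := by
  have := D.ext' (y - z) (fun k => by rw [map_sub, h k, sub_self])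
  exact sub_eq_zero.mp this

variable {B : Y →L[ℝ] Y}
  (hB : ∀ (y : Y) (k : ℤ), D.coord k (B y) = T k (D.coord (k + 1) y))

include hB

theorem coord_iterate (n : ℕ) (j : ℤ) (y : Y) :
    D.coord j (B^[n] y) = iterComp T j n (D.coord (j + (n : ℤ)) y) := by
  induction n generalizing y with
  | zero =>
      show D.coord j y = castL E (by simp) (D.coord (j + ((0 : ℕ) : ℤ)) y)
      rw [D.coord_cast (by simp)]
  | succ n ih =>
      rw [Function.iterate_succ_apply, ih (B y), hB]
      rw [show iterComp T (E := E) j (n + 1) =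
        (iterComp T j n).comp ((T (j + (n : ℤ))).comp (castL E (by push_cast; ring)))
        from rfl]
      simp only [ContinuousLinearMap.comp_apply]
      rw [D.coord_cast (by push_cast; ring)]

theorem iterate_single (n : ℕ) (k : ℤ) (a : E (k + (n : ℤ))) :
    B^[n] (D.single (k + (n : ℤ)) a) = D.single k (iterComp T k n a) := by
  apply D.eq_of_coord
  intro m
  rw [D.coord_iterate T hB n m]
  by_cases hm : m = k
  · subst hm
    rw [D.coord_single_self, D.coord_single_self]
  · rw [D.coord_single_ne _ _ _ (by omega), D.coord_single_ne _ _ _ hm, map_zero]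


theorem mixing_to_cond (hmix : TopologicallyMixing ⇑B) :
    ∀ (j : ℤ) (U V : Set (E j)), IsOpen U → U.Nonempty → IsOpen V → V.Nonempty →
      ∃ n₀ : ℕ, ∀ n ≥ n₀,
        ((((iterComp T (j - n) n).comp (castL E (by simp))) '' U)
            ∩ Metric.ball (0 : E (j - (n : ℤ))) 1).Nonempty
        ∧ ((iterComp T j n '' Metric.ball (0 : E (j + (n : ℤ))) 1) ∩ V).Nonempty := by
  intro j U V hU hUne hV hVne
  obtain ⟨u, hu⟩ := hUne
  obtain ⟨v, hv⟩ := hVne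
  obtain ⟨εU, hεU, hballU⟩ := Metric.isOpen_iff.mp hU u hu
  obtain ⟨εV, hεV, hballV⟩ := Metric.isOpen_iff.mp hV v hv
  set δ : ℝ := min (min εU εV) 1 with hδdef
  have hδ : 0 < δ := lt_min (lt_min hεU hεV) one_pos
  obtain ⟨N, hN⟩ := hmix (Metric.ball (D.single j u) δ) (Metric.ball (D.single j v) δ)
    Metric.isOpen_ball Metric.isOpen_ball ⟨_, Metric.mem_ball_self hδ⟩
    ⟨_, Metric.mem_ball_self hδ⟩
  refine ⟨N + 1, fun n hn => ?_⟩
  obtain ⟨q, ⟨z, hzU, hq⟩, hqV⟩ := hN n (by omega)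
  subst hq
  have hzu : ‖z - D.single j u‖ < δ := by
    simpa [dist_eq_norm] using hzU
  have hqv : ‖B^[n] z - D.single j v‖ < δ := by
    simpa [dist_eq_norm] using hqV
  have hcu : ∀ k : ℤ, k ≠ j → ‖D.coord k z‖ < δ := by
    intro k hk
    have : D.coord k z = D.coord k (z - D.single j u) := by
      rw [map_sub, D.coord_single_ne _ _ _ hk, sub_zero]
    rw [this]
    exact (D.norm_coord _ _).trans_lt hzu
  have hcv : ∀ k : ℤ, k ≠ j → ‖D.coord k (B^[n] z)‖ < δ := by
    intro k hk
    have : D.coord k (B^[n] z) = D.coord k (B^[n] z - D.single j v) := by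
      rw [map_sub, D.coord_single_ne _ _ _ hk, sub_zero]
    rw [this]
    exact (D.norm_coord _ _).trans_lt hqv
  constructor
  · refine ⟨D.coord (j - (n : ℤ)) (B^[n] z), ⟨D.coord j z, ?_, ?_⟩, ?_⟩
    · apply hballU
      rw [Metric.mem_ball, dist_eq_norm]
      have h1 : D.coord j z - u = D.coord j (z - D.single j u) := by
        rw [map_sub, D.coord_single_self]
      rw [h1]
      exact ((D.norm_coord _ _).trans_lt hzu).trans_le
        ((min_le_left _ _).trans (min_le_left _ _))
    · show (iterComp T (j - (n : ℤ)) n) (castL E (by omega) (D.coord j z))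
        = D.coord (j - (n : ℤ)) (B^[n] z)
      rw [D.coord_iterate T hB n (j - (n : ℤ)) z,
        D.coord_cast (show j = j - (n : ℤ) + (n : ℤ) by omega)]
    · rw [Metric.mem_ball, dist_zero_right]
      exact (hcv _ (by omega)).trans_le ((min_le_right _ _))
  · refine ⟨iterComp T j n (D.coord (j + (n : ℤ)) z), ⟨D.coord (j + (n : ℤ)) z, ?_, rfl⟩, ?_⟩
    · rw [Metric.mem_ball, dist_zero_right]
      exact (hcu _ (by omega)).trans_le (min_le_right _ _)
    · rw [← D.coord_iterate T hB n j z]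
      apply hballV
      rw [Metric.mem_ball, dist_eq_norm]
      have h1 : D.coord j (B^[n] z) - v = D.coord j (B^[n] z - D.single j v) := by
        rw [map_sub, D.coord_single_self]
      rw [h1]
      exact ((D.norm_coord _ _).trans_lt hqv).trans_le
        ((min_le_left _ _).trans (min_le_right _ _))

set_option maxHeartbeats 1000000 in
theorem mixing_of_cond
    (hc : ∀ (j : ℤ) (U V : Set (E j)), IsOpen U → U.Nonempty → IsOpen V → V.Nonempty →
      ∃ n₀ : ℕ, ∀ n ≥ n₀,
        ((((iterComp T (j - n) n).comp (castL E (by simp))) '' U)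
            ∩ Metric.ball (0 : E (j - (n : ℤ))) 1).Nonempty
        ∧ ((iterComp T j n '' Metric.ball (0 : E (j + (n : ℤ))) 1) ∩ V).Nonempty) :
    TopologicallyMixing ⇑B := by
  intro U V hU hV hUne hVne
  obtain ⟨x₀, hx₀⟩ := hUne
  obtain ⟨y₀, hy₀⟩ := hVne
  obtain ⟨εU, hεU, hballU⟩ := Metric.isOpen_iff.mp hU x₀ hx₀
  obtain ⟨εV, hεV, hballV⟩ := Metric.isOpen_iff.mp hV y₀ hy₀
  set δ : ℝ := min εU εV with hδdef
  have hδ : 0 < δ := lt_min hεU hεV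
  obtain ⟨sx, a, ha⟩ := D.dense' x₀ (δ / 2) (by positivity)
  obtain ⟨sy, b, hb⟩ := D.dense' y₀ (δ / 2) (by positivity)
  set s : Finset ℤ := sx ∪ sy with hsdef
  set c : ℝ := (s.card : ℝ) with hcdef
  have hc0 : 0 ≤ c := Nat.cast_nonneg _
  set θ : ℝ := δ / (4 * (c + 1)) with hθdef
  have hθ : 0 < θ := by positivity
  have harith : c * θ + c * θ < δ / 2 := by
    have hδeq : δ = θ * (4 * (c + 1)) := by
      rw [hθdef]; field_simp
    nlinarith [hθ, hc0]
  set a' : ∀ k : ℤ, E k := fun k => if k ∈ sx then a k else 0 with ha'def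
  set b' : ∀ k : ℤ, E k := fun k => if k ∈ sy then b k else 0 with hb'def
  set x : Y := ∑ k ∈ s, D.single k (a' k) with hxdef
  set y : Y := ∑ k ∈ s, D.single k (b' k) with hydef
  have hxx : x = ∑ k ∈ sx, D.single k (a k) := by
    rw [hxdef, ← Finset.sum_subset (Finset.subset_union_left (s₂ := sy))
      (fun k _ hk => by simp [ha'def, hk])]
    exact Finset.sum_congr rfl fun k hk => by simp [ha'def, hk]
  have hyy : y = ∑ k ∈ sy, D.single k (b k) := by
    rw [hydef, ← Finset.sum_subset (Finset.subset_union_right (s₁ := sx))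
      (fun k _ hk => by simp [hb'def, hk])]
    exact Finset.sum_congr rfl fun k hk => by simp [hb'def, hk]
  have key : ∀ j : ℤ, ∃ N : ℕ, ∀ n ≥ N,
      (∃ uu : E j, ‖uu - a' j‖ < θ ∧
        ‖(iterComp T (j - (n : ℤ)) n) (castL E (by omega) uu)‖ < θ) ∧
      (∃ ww : E (j + (n : ℤ)), ‖ww‖ < θ ∧ ‖iterComp T j n ww - b' j‖ < θ) := by
    intro j
    obtain ⟨N, hN⟩ := hc j (θ⁻¹ • Metric.ball (a' j) θ) (θ⁻¹ • Metric.ball (b' j) θ)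
      (Metric.isOpen_ball.smul₀ (by positivity))
      ((Set.Nonempty.smul_set ⟨_, Metric.mem_ball_self hθ⟩))
      (Metric.isOpen_ball.smul₀ (by positivity))
      ((Set.Nonempty.smul_set ⟨_, Metric.mem_ball_self hθ⟩))
    refine ⟨N, fun n hn => ?_⟩
    obtain ⟨⟨q1, ⟨u', hu', hq1⟩, hq1b⟩, ⟨q2, ⟨w', hw', hq2⟩, hq2V⟩⟩ := hN n hn
    constructor
    · obtain ⟨uu, huu, rfl⟩ := hu'
      refine ⟨uu, by simpa [dist_eq_norm] using huu, ?_⟩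
      have hmap : (iterComp T (j - (n : ℤ)) n) (castL E (by omega) uu) = θ • q1 := by
        rw [← hq1]
        simp only [ContinuousLinearMap.comp_apply, map_smul, smul_smul,
          mul_inv_cancel₀ hθ.ne', one_smul]
      rw [hmap, norm_smul, Real.norm_of_nonneg hθ.le]
      have hq1n : ‖q1‖ < 1 := by simpa [dist_zero_right] using hq1b
      calc θ * ‖q1‖ < θ * 1 := by
            exact mul_lt_mul_of_pos_left hq1n hθ
        _ = θ := mul_one θ
    · obtain ⟨t, ht, hq2'⟩ := hq2V
      refine ⟨θ • w', ?_, ?_⟩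
      · rw [norm_smul, Real.norm_of_nonneg hθ.le]
        have : ‖w'‖ < 1 := by simpa [dist_zero_right] using hw'
        calc θ * ‖w'‖ < θ * 1 := mul_lt_mul_of_pos_left this hθ
          _ = θ := mul_one θ
      · have : iterComp T j n (θ • w') = t := by
          rw [map_smul, hq2, ← hq2', smul_smul, mul_inv_cancel₀ hθ.ne', one_smul]
        rw [this]
        simpa [dist_eq_norm] using ht
  choose f hf using key
  refine ⟨s.sup f, fun n hn => ?_⟩
  have key2 : ∀ j : ℤ, ∃ (uu : E j) (ww : E (j + (n : ℤ))), j ∈ s →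
      ‖uu - a' j‖ < θ ∧
      ‖(iterComp T (j - (n : ℤ)) n) (castL E (by omega) uu)‖ < θ ∧
      ‖ww‖ < θ ∧ ‖iterComp T j n ww - b' j‖ < θ := by
    intro j
    by_cases hj : j ∈ s
    · obtain ⟨⟨uu, h1, h2⟩, ⟨ww, h3, h4⟩⟩ := hf j n (le_trans (Finset.le_sup hj) hn)
      exact ⟨uu, ww, fun _ => ⟨h1, h2, h3, h4⟩⟩
    · exact ⟨0, 0, fun h => absurd h hj⟩
  choose uu ww huw using key2
  set z : Y := (∑ j ∈ s, D.single j (uu j)) + ∑ j ∈ s, D.single (j + (n : ℤ)) (ww j)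
    with hzdef
  have hzx : ‖z - x‖ < δ / 2 := by
    have hzx1 : z - x = (∑ j ∈ s, D.single j (uu j - a' j))
        + ∑ j ∈ s, D.single (j + (n : ℤ)) (ww j) := by
      simp only [hzdef, hxdef, map_sub, Finset.sum_sub_distrib]
      abel
    rw [hzx1]
    calc ‖(∑ j ∈ s, D.single j (uu j - a' j)) + ∑ j ∈ s, D.single (j + (n : ℤ)) (ww j)‖
        ≤ (∑ j ∈ s, ‖D.single j (uu j - a' j)‖) + ∑ j ∈ s, ‖D.single (j + (n : ℤ)) (ww j)‖ :=
          (norm_add_le _ _).trans (add_le_add (norm_sum_le _ _) (norm_sum_le _ _))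
      _ ≤ c * θ + c * θ := by
          refine add_le_add ?_ ?_ <;>
          · refine le_trans (Finset.sum_le_card_nsmul _ _ θ fun j hj => ?_) (by
              rw [nsmul_eq_mul, hcdef])
            exact (D.norm_single _ _).trans (le_of_lt (by
              first
              | exact (huw j hj).1
              | exact (huw j hj).2.2.1))
      _ < δ / 2 := harith
  have hzU : z ∈ U := by
    apply hballU
    rw [Metric.mem_ball, dist_eq_norm]
    calc ‖z - x₀‖ = ‖(z - x) + (x - x₀)‖ := by abel_nf
      _ ≤ ‖z - x‖ + ‖x - x₀‖ := norm_add_le _ _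
      _ < δ / 2 + δ / 2 := by
          refine add_lt_add hzx ?_
          rw [hxx, ← norm_neg]
          simpa using ha
      _ = δ := by ring
      _ ≤ εU := min_le_left _ _
  have hBz : B^[n] z = (∑ j ∈ s, D.single (j - (n : ℤ))
        ((iterComp T (j - (n : ℤ)) n) (castL E (by omega) (uu j))))
      + ∑ j ∈ s, D.single j (iterComp T j n (ww j)) := by
    have hcoe : (⇑B)^[n] = ⇑(B ^ n) := (FunLike.coe_pow_eq_iterate B n).symm
    rw [hzdef, hcoe, map_add, map_sum, map_sum]
    congr 1
    · refine Finset.sum_congr rfl fun j _ => ?_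
      calc (B ^ n) (D.single j (uu j)) = B^[n] (D.single j (uu j)) := by rw [hcoe]
        _ = B^[n] (D.single (j - (n : ℤ) + (n : ℤ))
              (castL E (show j = j - (n : ℤ) + (n : ℤ) by omega) (uu j))) := by
            rw [D.single_cast (show j = j - (n : ℤ) + (n : ℤ) by omega)]
        _ = D.single (j - (n : ℤ)) ((iterComp T (j - (n : ℤ)) n)
              (castL E (by omega) (uu j))) := D.iterate_single T hB n _ _
    · refine Finset.sum_congr rfl fun j _ => ?_
      calc (B ^ n) (D.single (j + (n : ℤ)) (ww j))
          = B^[n] (D.single (j + (n : ℤ)) (ww j)) := by rw [hcoe]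
        _ = D.single j (iterComp T j n (ww j)) := D.iterate_single T hB n _ _
  have hBzy : ‖B^[n] z - y‖ < δ / 2 := by
    have h1 : B^[n] z - y = (∑ j ∈ s, D.single (j - (n : ℤ))
          ((iterComp T (j - (n : ℤ)) n) (castL E (by omega) (uu j))))
        + ∑ j ∈ s, D.single j (iterComp T j n (ww j) - b' j) := by
      rw [hBz, hydef]
      simp only [map_sub, Finset.sum_sub_distrib]
      abel
    rw [h1]
    calc ‖_ + _‖ ≤ (∑ j ∈ s, ‖D.single (j - (n : ℤ))
            ((iterComp T (j - (n : ℤ)) n) (castL E (by omega) (uu j)))‖)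
          + ∑ j ∈ s, ‖D.single j (iterComp T j n (ww j) - b' j)‖ :=
          (norm_add_le _ _).trans (add_le_add (norm_sum_le _ _) (norm_sum_le _ _))
      _ ≤ c * θ + c * θ := by
          refine add_le_add ?_ ?_ <;>
          · refine le_trans (Finset.sum_le_card_nsmul _ _ θ fun j hj => ?_) (by
              rw [nsmul_eq_mul, hcdef])
            exact (D.norm_single _ _).trans (le_of_lt (by
              first
              | exact (huw j hj).2.1
              | exact (huw j hj).2.2.2))
      _ < δ / 2 := harith
  have hBzV : B^[n] z ∈ V := by
    apply hballV
    rw [Metric.mem_ball, dist_eq_norm]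
    calc ‖B^[n] z - y₀‖ = ‖(B^[n] z - y) + (y - y₀)‖ := by abel_nf
      _ ≤ ‖B^[n] z - y‖ + ‖y - y₀‖ := norm_add_le _ _
      _ < δ / 2 + δ / 2 := by
          refine add_lt_add hBzy ?_
          rw [hyy, ← norm_neg]
          simpa using hb
      _ = δ := by ring
      _ ≤ εV := min_le_right _ _
  exact ⟨B^[n] z, ⟨z, hzU, rfl⟩, hBzV⟩

end ShiftData
end Abstract

section Instances
variable {E : ℤ → Type*} [∀ k, NormedAddCommGroup (E k)] [∀ k, NormedSpace ℝ (E k)]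

/-- `ShiftData` structure on `lp E p` for `1 ≤ p < ∞`. -/
noncomputable def lpShiftData (p : ℝ≥0∞) [Fact (1 ≤ p)] (hp : p ≠ ∞) :
    ShiftData E (lp E p) where
  coord k :=
    { toFun := fun f => f k
      map_add' := fun f g => congrFun (lp.coeFn_add f g) k
      map_smul' := fun c f => congrFun (lp.coeFn_smul c f) k }
  single k :=
    { toFun := fun a => lp.single p k a
      map_add' := fun a b => by
        refine lp.ext (funext fun m => ?_)
        by_cases h : m = k
        · subst h
          simp [lp.single_apply_self, lp.coeFn_add]
        · simp [lp.single_apply_ne p k _ h, lp.coeFn_add]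
      map_smul' := fun c a => by simp }
  norm_coord k f := lp.norm_apply_le_norm
    ((lt_of_lt_of_le zero_lt_one (Fact.out : 1 ≤ p)).ne') f k
  coord_single_self k a := lp.single_apply_self p k a
  coord_single_ne k m a h := lp.single_apply_ne p m a h
  norm_single k a := by
    have hpt : 0 < p.toReal := ENNReal.toReal_pos
      ((lt_of_lt_of_le zero_lt_one (Fact.out : 1 ≤ p)).ne') hp
    have := lp.norm_single (lt_of_lt_of_le zero_lt_one (Fact.out : 1 ≤ p)) k a
    exact le_of_eq this
  ext' f h := by
    refine lp.ext (funext fun k => ?_)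
    simpa using h k
  dense' f ε hε := by
    have hsum := lp.hasSum_single hp f
    have hev : ∀ᶠ (t : Finset ℤ) in atTop,
        (∑ i ∈ t, lp.single p i (f i)) ∈ Metric.ball f ε :=
      hsum.eventually (Metric.ball_mem_nhds f hε)
    obtain ⟨t, ht⟩ := hev.exists
    refine ⟨t, fun k => f k, ?_⟩
    simpa [dist_eq_norm, norm_sub_rev] using ht

theorem single_mem_c0Sum (k : ℤ) (a : E k) : lp.single ∞ k a ∈ c0Sum E := by
  show Tendsto (fun i => ‖(lp.single ∞ k a : ∀ i, E i) i‖) cofinite (nhds 0)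
  have hev : (fun _ : ℤ => (0 : ℝ)) =ᶠ[cofinite]
      fun i => ‖(lp.single ∞ k a : ∀ i, E i) i‖ := by
    rw [Filter.eventuallyEq_iff_exists_mem]
    refine ⟨{k}ᶜ, ?_, fun i hi => ?_⟩
    · rw [Filter.mem_cofinite, compl_compl]
      exact Set.finite_singleton k
    · show (0 : ℝ) = ‖(lp.single ∞ k a : ∀ i, E i) i‖
      rw [lp.single_apply_ne ∞ k a hi, norm_zero]
  exact tendsto_const_nhds.congr' hev

/-- `ShiftData` structure on `c0Sum E`. -/
noncomputable def c0ShiftData : ShiftData E (c0Sum E) where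
  coord k :=
    { toFun := fun f => ((f : lp E ∞) : ∀ i, E i) k
      map_add' := fun f g => congrFun (lp.coeFn_add (f : lp E ∞) (g : lp E ∞)) k
      map_smul' := fun c f => congrFun (lp.coeFn_smul c (f : lp E ∞)) k }
  single k :=
    { toFun := fun a => ⟨lp.single ∞ k a, single_mem_c0Sum k a⟩
      map_add' := fun a b => by
        refine Subtype.ext ?_
        refine lp.ext (funext fun m => ?_)
        by_cases h : m = k
        · subst h
          simp [lp.single_apply_self, lp.coeFn_add]
        · simp [lp.single_apply_ne ∞ k _ h, lp.coeFn_add]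
      map_smul' := fun c a => by
        refine Subtype.ext ?_
        simp }
  norm_coord k f := lp.norm_apply_le_norm ENNReal.top_ne_zero (f : lp E ∞) k
  coord_single_self k a := lp.single_apply_self ∞ k a
  coord_single_ne k m a h := lp.single_apply_ne ∞ m a h
  norm_single k a := by
    rw [Submodule.coe_norm]
    show ‖lp.single ∞ k a‖ ≤ ‖a‖
    refine lp.norm_le_of_forall_le (norm_nonneg a) fun i => ?_
    by_cases h : i = k
    · subst h
      rw [lp.single_apply_self]
    · rw [lp.single_apply_ne ∞ k a h, norm_zero]
      exact norm_nonneg a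
  ext' f h := by
    refine Subtype.ext (lp.ext (funext fun k => ?_))
    simpa using h k
  dense' f ε hε := by
    have hten : Tendsto (fun i => ‖((f : lp E ∞) : ∀ i, E i) i‖) cofinite (nhds 0) :=
      f.2
    have hev : ∀ᶠ i in cofinite, ‖((f : lp E ∞) : ∀ i, E i) i‖ < ε / 2 :=
      hten.eventually (gt_mem_nhds (half_pos hε))
    have hfin : {i : ℤ | ¬ ‖((f : lp E ∞) : ∀ i, E i) i‖ < ε / 2}.Finite :=
      Filter.eventually_cofinite.mp hev
    refine ⟨hfin.toFinset, fun k => ((f : lp E ∞) : ∀ i, E i) k, ?_⟩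
    rw [Submodule.coe_norm, Submodule.coe_sub, AddSubmonoidClass.coe_finset_sum]
    show ‖(f : lp E ∞) - ∑ k ∈ hfin.toFinset,
        lp.single ∞ k (((f : lp E ∞) : ∀ i, E i) k)‖ < ε
    have hle : ‖(f : lp E ∞) - ∑ k ∈ hfin.toFinset,
        lp.single ∞ k (((f : lp E ∞) : ∀ i, E i) k)‖ ≤ ε / 2 := by
      refine lp.norm_le_of_forall_le (by positivity) fun i => ?_
      have happ : (((f : lp E ∞) - ∑ k ∈ hfin.toFinset,
          lp.single ∞ k (((f : lp E ∞) : ∀ i, E i) k) : lp E ∞) : ∀ i, E i) i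
          = ((f : lp E ∞) : ∀ i, E i) i - ∑ k ∈ hfin.toFinset,
              (lp.single ∞ k (((f : lp E ∞) : ∀ i, E i) k) : ∀ i, E i) i := by
        rw [lp.coeFn_sub, Pi.sub_apply, lp.coeFn_sum, Finset.sum_apply]
      rw [happ]
      by_cases hi : i ∈ hfin.toFinset
      · rw [Finset.sum_eq_single_of_mem i hi
          (fun m _ hm => lp.single_apply_ne ∞ m _ (Ne.symm hm)),
          lp.single_apply_self, sub_self, norm_zero]
        positivity
      · have h0 : ∀ m ∈ hfin.toFinset, (lp.single ∞ m
            (((f : lp E ∞) : ∀ i, E i) m) : ∀ i, E i) i = 0 := fun m hm =>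
          lp.single_apply_ne ∞ m _ (fun h => hi (h ▸ hm))
        rw [Finset.sum_eq_zero h0, sub_zero]
        have : i ∉ {i : ℤ | ¬ ‖((f : lp E ∞) : ∀ i, E i) i‖ < ε / 2} := by
          simpa using hi
        simp only [Set.mem_setOf_eq, not_not] at this
        exact this.le
    linarith

end Instances
/-- the bilateral shift `B_{(T_k)}` on `ℓ^p((X_k)_k,ℤ)` (resp. `c₀((X_k)_k,ℤ)`)
is mixing iff for each `j` and all non-empty open `U, V ⊆ X_j` there is `n₀` such that for
all `n ≥ n₀`, `T_{j-n,j} U ∩ B_{j-n}(0,1) ≠ ∅` and `T_{j,j+n} B_{j+n}(0,1) ∩ V ≠ ∅`. -/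
theorem stmt_6 (E : ℤ → Type*) [∀ k, NormedAddCommGroup (E k)] [∀ k, NormedSpace ℝ (E k)]
    [∀ k, CompleteSpace (E k)] (T : ∀ k : ℤ, E (k + 1) →L[ℝ] E k)
    (p : ℝ≥0∞) [Fact (1 ≤ p)] (hp : p ≠ ∞) :
    (∀ B : lp E p →L[ℝ] lp E p,
      (∀ (x : lp E p) (k : ℤ), (B x : ∀ i, E i) k = T k ((x : ∀ i, E i) (k + 1))) →
      (TopologicallyMixing ⇑B ↔
        ∀ (j : ℤ) (U V : Set (E j)), IsOpen U → U.Nonempty → IsOpen V → V.Nonempty →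
          ∃ n₀ : ℕ, ∀ n ≥ n₀,
            ((((iterComp T (j - n) n).comp (castL E (by omega))) '' U)
                ∩ Metric.ball (0 : E (j - (n : ℤ))) 1).Nonempty
            ∧ ((iterComp T j n '' Metric.ball (0 : E (j + (n : ℤ))) 1) ∩ V).Nonempty))
    ∧ (∀ B : c0Sum E →L[ℝ] c0Sum E,
      (∀ (x : c0Sum E) (k : ℤ),
        ((B x : lp E ∞) : ∀ i, E i) k = T k (((x : lp E ∞) : ∀ i, E i) (k + 1))) →
      (TopologicallyMixing ⇑B ↔
        ∀ (j : ℤ) (U V : Set (E j)), IsOpen U → U.Nonempty → IsOpen V → V.Nonempty →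
          ∃ n₀ : ℕ, ∀ n ≥ n₀,
            ((((iterComp T (j - n) n).comp (castL E (by omega))) '' U)
                ∩ Metric.ball (0 : E (j - (n : ℤ))) 1).Nonempty
            ∧ ((iterComp T j n '' Metric.ball (0 : E (j + (n : ℤ))) 1) ∩ V).Nonempty)) := by
  constructor
  · intro B hB
    have hB' : ∀ (y : lp E p) (k : ℤ),
        (lpShiftData (E := E) p hp).coord k (B y)
          = T k ((lpShiftData (E := E) p hp).coord (k + 1) y) := hB
    exact ⟨fun h => (lpShiftData p hp).mixing_to_cond T hB' h,
      fun h => (lpShiftData p hp).mixing_of_cond T hB' h⟩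
  · intro B hB
    have hB' : ∀ (y : c0Sum E) (k : ℤ),
        (c0ShiftData (E := E)).coord k (B y)
          = T k ((c0ShiftData (E := E)).coord (k + 1) y) := hB
    exact ⟨fun h => c0ShiftData.mixing_to_cond T hB' h,
      fun h => c0ShiftData.mixing_of_cond T hB' h⟩
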